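/- Let H(s) be the (L+1)×(L+1) real symmetric matrix H(s) = (1-s)·D + s·A, where D = diag(0,1,1,...,1) and A is the tridiagonal matrix with diagonal (1/2, 1, 1, ..., 1, 1/2) and all off-diagonal entries on the first sub/super-diagonal equal to -1/2. Then for all 0 ≤ s < 1/3, H(s) has exactly one eigenvalue smaller than 1/3, all other eigenvalues are larger than 2/3, and hence the spectral gap of H(s) is at least 1/3. -/

import Mathlib

open Matrix Finset

section GapAux

variable {L : ℕ}

private def Nmat (L : ℕ) : Matrix (Fin (L+1)) (Fin (L+1)) ℝ :=
  Matrix.of fun i j => if (i:ℕ) + 1 = (j:ℕ) then (1:ℝ) else 0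

private lemma quadN (v : Fin (L+1) → ℝ) :
    v ⬝ᵥ ((Nmat L) *ᵥ v) = ∑ k : Fin L, v k.castSucc * v k.succ := by
  have hrow : ∀ i : Fin (L+1),
      ((Nmat L) *ᵥ v) i = ∑ j : Fin (L+1), if (i:ℕ) + 1 = (j:ℕ) then v j else 0 := by
    intro i
    simp only [Nmat, Matrix.mulVec, dotProduct, Matrix.of_apply, ite_mul, one_mul, zero_mul]
  have hlast : ((Nmat L) *ᵥ v) (Fin.last L) = 0 := by
    rw [hrow]
    refine Finset.sum_eq_zero fun j _ => ?_
    have := j.isLt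
    rw [if_neg]
    simp only [Fin.val_last]
    omega
  have hcs : ∀ k : Fin L, ((Nmat L) *ᵥ v) k.castSucc = v k.succ := by
    intro k
    rw [hrow]
    have hterm : ∀ j : Fin (L+1), (if ((k.castSucc : Fin (L+1)) : ℕ) + 1 = (j:ℕ) then v j else 0)
        = if j = k.succ then v j else 0 := by
      intro j
      rcases eq_or_ne j k.succ with h | h
      · subst h
        rw [if_pos (by simp), if_pos rfl]
      · rw [if_neg, if_neg h]
        intro hc
        exact h (Fin.ext (by simpa using hc.symm))
    rw [Finset.sum_congr rfl fun j _ => hterm j, Finset.sum_ite_eq' Finset.univ k.succ v]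
    simp
  show (∑ i, v i * ((Nmat L) *ᵥ v) i) = _
  rw [Fin.sum_univ_castSucc]
  simp [hlast, hcs]

private lemma quadNT (v : Fin (L+1) → ℝ) :
    v ⬝ᵥ ((Nmat L)ᵀ *ᵥ v) = ∑ k : Fin L, v k.castSucc * v k.succ := by
  rw [Matrix.dotProduct_mulVec, Matrix.vecMul_transpose, dotProduct_comm, quadN]

private lemma quad_diag (d v : Fin (L+1) → ℝ) :
    v ⬝ᵥ ((Matrix.diagonal d) *ᵥ v) = ∑ i, d i * v i ^ 2 := by
  show (∑ i, v i * ((Matrix.diagonal d) *ᵥ v) i) = _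
  refine Finset.sum_congr rfl fun i _ => ?_
  rw [Matrix.mulVec_diagonal]
  ring

private lemma Amat_eq :
    (Matrix.of fun (i j : Fin (L + 1)) =>
      if i = j then (if (i : ℕ) = 0 ∨ (i : ℕ) = L then 1 / 2 else 1)
      else if (i : ℕ) + 1 = (j : ℕ) ∨ (j : ℕ) + 1 = (i : ℕ) then -(1 / 2) else (0:ℝ))
    = Matrix.diagonal (fun i : Fin (L+1) => if (i:ℕ) = 0 ∨ (i:ℕ) = L then (1/2:ℝ) else 1)
      - (1/2 : ℝ) • (Nmat L + (Nmat L)ᵀ) := by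
  ext i j
  simp only [Matrix.of_apply, Matrix.sub_apply, Matrix.smul_apply, Matrix.add_apply,
    Matrix.transpose_apply, Matrix.diagonal_apply, Nmat, smul_eq_mul]
  simp only [Fin.ext_iff]
  split_ifs <;> first | omega | norm_num

private lemma quadA (v : Fin (L+1) → ℝ) :
    v ⬝ᵥ ((Matrix.of fun (i j : Fin (L + 1)) =>
      if i = j then (if (i : ℕ) = 0 ∨ (i : ℕ) = L then 1 / 2 else 1)
      else if (i : ℕ) + 1 = (j : ℕ) ∨ (j : ℕ) + 1 = (i : ℕ) then -(1 / 2) else (0:ℝ)) *ᵥ v)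
      = (∑ i : Fin (L+1), (if (i:ℕ) = 0 ∨ (i:ℕ) = L then (1/2:ℝ) else 1) * v i ^ 2)
        - ∑ k : Fin L, v k.castSucc * v k.succ := by
  rw [Amat_eq, Matrix.sub_mulVec, dotProduct_sub, Matrix.smul_mulVec,
    dotProduct_smul, Matrix.add_mulVec, dotProduct_add, quadN, quadNT, quad_diag,
    smul_eq_mul]
  ring

private lemma quadA_nonneg (v : Fin (L+1) → ℝ) :
    0 ≤ v ⬝ᵥ ((Matrix.of fun (i j : Fin (L + 1)) =>
      if i = j then (if (i : ℕ) = 0 ∨ (i : ℕ) = L then 1 / 2 else 1)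
      else if (i : ℕ) + 1 = (j : ℕ) ∨ (j : ℕ) + 1 = (i : ℕ) then -(1 / 2) else (0:ℝ)) *ᵥ v) := by
  rw [quadA]
  have h1 : ∑ k : Fin L, v k.castSucc * v k.succ
      ≤ ∑ k : Fin L, (v k.castSucc ^ 2 + v k.succ ^ 2) / 2 :=
    Finset.sum_le_sum fun k _ => by nlinarith [sq_nonneg (v k.castSucc - v k.succ)]
  have h2 : ∑ i : Fin (L+1), v i ^ 2 = (∑ k : Fin L, v k.castSucc ^ 2) + v (Fin.last L) ^ 2 :=
    Fin.sum_univ_castSucc (f := fun i => v i ^ 2)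
  have h3 : ∑ i : Fin (L+1), v i ^ 2 = v 0 ^ 2 + ∑ k : Fin L, v k.succ ^ 2 :=
    Fin.sum_univ_succ (f := fun i => v i ^ 2)
  have h4 : ∑ i : Fin (L+1), (if (i:ℕ) = 0 ∨ (i:ℕ) = L then v i ^ 2 else 0)
      ≤ v 0 ^ 2 + v (Fin.last L) ^ 2 := by
    have hterm : ∀ i : Fin (L+1), (if (i:ℕ) = 0 ∨ (i:ℕ) = L then v i ^ 2 else 0)
        ≤ (if i = 0 then v i ^ 2 else 0) + (if i = Fin.last L then v i ^ 2 else 0) := by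
      intro i
      have hc : ((i:ℕ) = 0 ∨ (i:ℕ) = L) ↔ (i = 0 ∨ i = Fin.last L) := by
        rw [Fin.ext_iff, Fin.ext_iff, Fin.val_last, Fin.val_zero]
      split_ifs <;> first | linarith [sq_nonneg (v i)] | tauto
    calc ∑ i : Fin (L+1), (if (i:ℕ) = 0 ∨ (i:ℕ) = L then v i ^ 2 else 0)
        ≤ ∑ i : Fin (L+1), ((if i = 0 then v i ^ 2 else 0) + (if i = Fin.last L then v i ^ 2 else 0)) :=
          Finset.sum_le_sum fun i _ => hterm i
      _ = v 0 ^ 2 + v (Fin.last L) ^ 2 := by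
          rw [Finset.sum_add_distrib, Finset.sum_ite_eq' Finset.univ (0 : Fin (L+1)) (fun i => v i ^ 2),
            Finset.sum_ite_eq' Finset.univ (Fin.last L) (fun i => v i ^ 2)]
          simp
  have h5 : ∑ i : Fin (L+1), (if (i:ℕ) = 0 ∨ (i:ℕ) = L then (1/2:ℝ) else 1) * v i ^ 2
      = (∑ i : Fin (L+1), v i ^ 2) - (1/2) * ∑ i : Fin (L+1), (if (i:ℕ) = 0 ∨ (i:ℕ) = L then v i ^ 2 else 0) := by
    rw [Finset.sum_congr rfl (fun (i : Fin (L+1)) _ => show (if (i:ℕ) = 0 ∨ (i:ℕ) = L then (1/2:ℝ) else 1) * v i ^ 2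
        = v i ^ 2 - (1/2) * (if (i:ℕ) = 0 ∨ (i:ℕ) = L then v i ^ 2 else 0) by split_ifs <;> ring),
      Finset.sum_sub_distrib, ← Finset.mul_sum]
  have h6 : ∑ k : Fin L, (v k.castSucc ^ 2 + v k.succ ^ 2) / 2
      = ((∑ k : Fin L, v k.castSucc ^ 2) + ∑ k : Fin L, v k.succ ^ 2) / 2 := by
    rw [← Finset.sum_add_distrib, Finset.sum_div]
  rw [h5]
  linarith

end GapAux

set_option maxHeartbeats 1600000 in
/-- For `0 ≤ s < 1/3`, the matrix `H(s) = (1-s)·diag(0,1,…,1) + s·A`, where `A` is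
the tridiagonal matrix with diagonal `(1/2,1,…,1,1/2)` and off-diagonal entries `-1/2`,
has exactly one eigenvalue smaller than `1/3`, all other eigenvalues larger than `2/3`,
and hence spectral gap at least `1/3`. -/
theorem gap_of_interpolating_hamiltonian_small_s (L : ℕ) (s : ℝ)
    (hs0 : 0 ≤ s) (hs : s < 1 / 3)
    (D A H : Matrix (Fin (L + 1)) (Fin (L + 1)) ℝ)
    (hD : D = Matrix.diagonal (fun i => if i = 0 then 0 else 1))
    (hA : A = Matrix.of fun (i j : Fin (L + 1)) =>
      if i = j then (if (i : ℕ) = 0 ∨ (i : ℕ) = L then 1 / 2 else 1)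
      else if (i : ℕ) + 1 = (j : ℕ) ∨ (j : ℕ) + 1 = (i : ℕ) then -(1 / 2) else 0)
    (hH : H = (1 - s) • D + s • A)
    (hHerm : H.IsHermitian) :
    ((Finset.univ.filter (fun i => hHerm.eigenvalues i < 1 / 3)).card = 1) ∧
    (∀ i, hHerm.eigenvalues i < 1 / 3 ∨ 2 / 3 < hHerm.eigenvalues i) ∧
    (∀ i j, hHerm.eigenvalues i < 1 / 3 → ¬ (hHerm.eigenvalues j < 1 / 3) →
      1 / 3 ≤ hHerm.eigenvalues j - hHerm.eigenvalues i) := by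
  set μ := hHerm.eigenvalues with hμ
  -- Key Rayleigh lower bound on the subspace {v | v 0 = 0}
  have key : ∀ v : Fin (L+1) → ℝ, v 0 = 0 →
      (1 - s) * (v ⬝ᵥ v) ≤ v ⬝ᵥ (H *ᵥ v) := by
    intro v hv
    rw [hH, hD, hA, Matrix.add_mulVec, dotProduct_add, Matrix.smul_mulVec,
      Matrix.smul_mulVec, dotProduct_smul, dotProduct_smul,
      smul_eq_mul, smul_eq_mul]
    have hDq : v ⬝ᵥ ((Matrix.diagonal fun i : Fin (L+1) => if i = 0 then (0:ℝ) else 1) *ᵥ v)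
        = v ⬝ᵥ v := by
      rw [quad_diag]
      show _ = ∑ i, v i * v i
      refine Finset.sum_congr rfl fun i _ => ?_
      rcases eq_or_ne i 0 with h | h
      · subst h; simp [hv]
      · simp only [if_neg h]; ring
    have hAq := quadA_nonneg (L := L) v
    have hvv : (0:ℝ) ≤ v ⬝ᵥ v := Finset.sum_nonneg fun i _ => mul_self_nonneg (v i)
    rw [hDq]
    nlinarith [mul_nonneg hs0 hAq]
  -- eigenvector facts
  have heig : ∀ i, H *ᵥ ⇑(hHerm.eigenvectorBasis i) = μ i • ⇑(hHerm.eigenvectorBasis i) :=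
    fun i => hHerm.mulVec_eigenvectorBasis i
  have horth : ∀ i j, ⇑(hHerm.eigenvectorBasis i) ⬝ᵥ ⇑(hHerm.eigenvectorBasis j)
      = if i = j then (1:ℝ) else 0 := by
    intro i j
    have h : (star (hHerm.eigenvectorUnitary : Matrix (Fin (L+1)) (Fin (L+1)) ℝ)
        * (hHerm.eigenvectorUnitary : Matrix (Fin (L+1)) (Fin (L+1)) ℝ)) i j
        = (1 : Matrix (Fin (L+1)) (Fin (L+1)) ℝ) i j := by
      rw [Unitary.coe_star_mul_self]
    simpa [Matrix.mul_apply, Matrix.one_apply, Matrix.star_apply,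
      dotProduct] using h
  -- Claim 1 : at most one eigenvalue ≤ 2/3
  have claim1 : ∀ i j, i ≠ j → μ i ≤ 2/3 → μ j ≤ 2/3 → False := by
    intro i j hij hi hj
    set u : Fin (L+1) → ℝ := ⇑(hHerm.eigenvectorBasis i) with hu
    set v : Fin (L+1) → ℝ := ⇑(hHerm.eigenvectorBasis j) with hv
    have huu : u ⬝ᵥ u = 1 := by simpa using horth i i
    have hvv : v ⬝ᵥ v = 1 := by simpa using horth j j
    have huv : u ⬝ᵥ v = 0 := by simpa [hij] using horth i j
    have hvu : v ⬝ᵥ u = 0 := by simpa [hij.symm] using horth j i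
    set w : Fin (L+1) → ℝ := v 0 • u - u 0 • v with hw
    have hw0 : w 0 = 0 := by
      simp only [hw, Pi.sub_apply, Pi.smul_apply, smul_eq_mul]
      ring
    have hHw : H *ᵥ w = v 0 • (μ i • u) - u 0 • (μ j • v) := by
      rw [hw, Matrix.mulVec_sub, Matrix.mulVec_smul, Matrix.mulVec_smul, heig i, heig j]
    have hQw : w ⬝ᵥ (H *ᵥ w) = (v 0)^2 * μ i + (u 0)^2 * μ j := by
      rw [hHw, hw]
      simp only [sub_dotProduct, dotProduct_sub, smul_dotProduct,
        dotProduct_smul, huu, hvv, huv, hvu, smul_eq_mul]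
      ring
    have hww : w ⬝ᵥ w = (v 0)^2 + (u 0)^2 := by
      rw [hw]
      simp only [sub_dotProduct, dotProduct_sub, smul_dotProduct,
        dotProduct_smul, huu, hvv, huv, hvu, smul_eq_mul]
      ring
    have hk := key w hw0
    rw [hQw, hww] at hk
    have hpos : (0:ℝ) < 1/3 - s := by linarith
    have h1 : (0:ℝ) ≤ (2/3 - μ i) * (v 0)^2 := mul_nonneg (by linarith) (sq_nonneg _)
    have h2 : (0:ℝ) ≤ (2/3 - μ j) * (u 0)^2 := mul_nonneg (by linarith) (sq_nonneg _)
    have hS0 : (1/3 - s) * ((v 0)^2 + (u 0)^2) ≤ 0 := by nlinarith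
    have hSle : (v 0)^2 + (u 0)^2 ≤ 0 := by nlinarith [sq_nonneg (v 0), sq_nonneg (u 0)]
    have hv0 : v 0 = 0 :=
      sq_eq_zero_iff.mp (le_antisymm (by nlinarith [sq_nonneg (u 0)]) (sq_nonneg _))
    have hu0 : u 0 = 0 :=
      sq_eq_zero_iff.mp (le_antisymm (by nlinarith [sq_nonneg (v 0)]) (sq_nonneg _))
    have hk2 := key u hu0
    have hQu : u ⬝ᵥ (H *ᵥ u) = μ i := by
      rw [heig i]
      change u ⬝ᵥ (μ i • u) = μ i
      rw [dotProduct_smul, huu, smul_eq_mul, mul_one]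
    rw [hQu, huu] at hk2
    linarith
  -- Claim 2 : at least one eigenvalue < 1/3
  have claim2 : ∃ i, μ i < 1/3 := by
    by_contra hcon
    push_neg at hcon
    -- spectral decomposition gives a Rayleigh expansion
    set U : Matrix (Fin (L+1)) (Fin (L+1)) ℝ := (hHerm.eigenvectorUnitary : Matrix (Fin (L+1)) (Fin (L+1)) ℝ) with hUdef
    have hspec : H = U * Matrix.diagonal (RCLike.ofReal ∘ μ) * star U := hHerm.spectral_theorem
    have hUU : U * star U = 1 := Unitary.coe_mul_star_self hHerm.eigenvectorUnitary
    set e0 : Fin (L+1) → ℝ := fun k => if k = 0 then 1 else 0 with he0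
    set y : Fin (L+1) → ℝ := (star U) *ᵥ e0 with hy
    have hdp : ∀ z : Fin (L+1) → ℝ, e0 ⬝ᵥ (U *ᵥ z) = y ⬝ᵥ z := by
      intro z
      rw [Matrix.dotProduct_mulVec, hy]
      congr 1
      rw [Matrix.star_eq_conjTranspose, Matrix.conjTranspose_eq_transpose_of_trivial,
        Matrix.mulVec_transpose]
    have hQ1 : e0 ⬝ᵥ (H *ᵥ e0) = ∑ i, μ i * (y i)^2 := by
      rw [hspec]
      rw [← Matrix.mulVec_mulVec, ← Matrix.mulVec_mulVec, hdp, ← hy]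
      rw [quad_diag]
      refine Finset.sum_congr rfl fun i _ => ?_
      simp [RCLike.ofReal_real_eq_id]
    have hQ2 : e0 ⬝ᵥ e0 = ∑ i, (y i)^2 := by
      have h1 : e0 ⬝ᵥ e0 = e0 ⬝ᵥ ((U * star U) *ᵥ e0) := by rw [hUU, Matrix.one_mulVec]
      rw [h1, ← Matrix.mulVec_mulVec, hdp, ← hy]
      show (∑ i, y i * y i) = _
      exact Finset.sum_congr rfl fun i _ => by ring
    have he0H : e0 ⬝ᵥ (H *ᵥ e0) = s / 2 := by
      have hrow : (H *ᵥ e0) 0 = H 0 0 := by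
        show (∑ j, H 0 j * e0 j) = H 0 0
        rw [Finset.sum_congr rfl (fun j _ => show H 0 j * e0 j
            = if j = 0 then H 0 j else 0 by by_cases hj : j = 0 <;> simp [he0, hj]),
          Finset.sum_ite_eq' Finset.univ (0 : Fin (L+1)) (fun j => H 0 j)]
        simp
      have hH00 : H 0 0 = s / 2 := by
        rw [hH, hD, hA]
        simp
        ring
      have : e0 ⬝ᵥ (H *ᵥ e0) = (H *ᵥ e0) 0 := by
        show (∑ i, e0 i * (H *ᵥ e0) i) = _
        rw [Finset.sum_congr rfl (fun i _ => show e0 i * (H *ᵥ e0) i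
            = if i = 0 then (H *ᵥ e0) i else 0 by by_cases hi : i = 0 <;> simp [he0, hi]),
          Finset.sum_ite_eq' Finset.univ (0 : Fin (L+1)) (fun i => (H *ᵥ e0) i)]
        simp
      rw [this, hrow, hH00]
    have he0e0 : e0 ⬝ᵥ e0 = 1 := by
      show (∑ i, e0 i * e0 i) = 1
      rw [Finset.sum_congr rfl (fun i _ => show e0 i * e0 i
          = if i = 0 then (1:ℝ) else 0 by by_cases hi : i = 0 <;> simp [he0, hi]),
        Finset.sum_ite_eq' Finset.univ (0 : Fin (L+1)) (fun _ => (1:ℝ))]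
      simp
    have hy2 : ∑ i, (y i)^2 = 1 := by rw [← hQ2, he0e0]
    have hsum : (1:ℝ)/3 ≤ ∑ i, μ i * (y i)^2 := by
      calc (1:ℝ)/3 = ∑ i, (1/3) * (y i)^2 := by rw [← Finset.mul_sum, hy2, mul_one]
        _ ≤ ∑ i, μ i * (y i)^2 :=
            Finset.sum_le_sum fun i _ => mul_le_mul_of_nonneg_right (hcon i) (sq_nonneg _)
    rw [← hQ1, he0H] at hsum
    linarith
  -- assemble
  obtain ⟨i0, hi0⟩ := claim2
  have part2 : ∀ i, μ i < 1/3 ∨ 2/3 < μ i := by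
    intro i
    by_contra hcon
    push_neg at hcon
    obtain ⟨hc1, hc2⟩ := hcon
    have hne : i ≠ i0 := by
      intro h
      rw [h] at hc1
      linarith
    exact claim1 i i0 hne hc2 (by linarith)
  refine ⟨?_, part2, ?_⟩
  · rw [Finset.card_eq_one]
    refine ⟨i0, ?_⟩
    ext j
    simp only [Finset.mem_filter, Finset.mem_univ, true_and, Finset.mem_singleton]
    constructor
    · intro hj
      by_contra hne
      exact claim1 j i0 hne (by linarith) (by linarith)
    · rintro rfl
      exact hi0
  · intro i j hi hj
    rcases part2 j with h | h
    · exact absurd h hj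
    · linarith
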